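/- (Euler–Maclaurin formula) Let g : ℝ → ℝ be 2N times continuously differentiable, let a < b be reals, let h > 0 be such that K := (b-a)/h is a positive integer, and let N be a positive integer. Define the trapezoidal sum T := (h/2)·Σ_{j=0}^{K-1} ( g(a+jh) + g(a+(j+1)h) ). Then ∫_a^b g(y) dy − T = h^{2N+1} ∫_0^K ( B_{2N}(y − ⌊y⌋)/(2N)! )·g^{(2N)}(a + yh) dy − Σ_{j=1}^{N} ( b_{2j}/(2j)! )·h^{2j}·( g^{(2j-1)}(b) − g^{(2j-1)}(a) ). -/

import Mathlib

section EulerMaclaurinAux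

open Polynomial intervalIntegral Finset MeasureTheory

noncomputable def Bp (m : ℕ) (y : ℝ) : ℝ := (Polynomial.aeval y (Polynomial.bernoulli m) : ℝ)

lemma Bp_rat (n : ℕ) (q : ℚ) : Bp n (q : ℝ) = (((Polynomial.bernoulli n).eval q : ℚ) : ℝ) := by
  rw [Bp, show ((q:ℝ)) = algebraMap ℚ ℝ q from rfl, aeval_algebraMap_apply]
  simp [aeval_def, eval₂_eq_eval_map, Polynomial.eval_map_algebraMap]

lemma Bp_zero (n : ℕ) : Bp n 0 = ((bernoulli n : ℚ) : ℝ) := by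
  simpa using Bp_rat n 0

lemma Bp_one (n : ℕ) : Bp n 1 = ((bernoulli' n : ℚ) : ℝ) := by
  simpa using Bp_rat n 1

lemma Bp_cont (n : ℕ) : Continuous (Bp n) := by
  have : Bp n = fun y => ((Polynomial.bernoulli n).map (algebraMap ℚ ℝ)).eval y := by
    funext y; rw [Bp, aeval_def, eval₂_eq_eval_map]
  rw [this]
  exact Polynomial.continuous _

lemma Bp_hasDeriv (m : ℕ) (c y : ℝ) :
    HasDerivAt (fun y => Bp (m+1) (y - c) / (m+1).factorial)
      (Bp m (y - c) / m.factorial) y := by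
  have hp : HasDerivAt (fun x : ℝ => aeval x (Polynomial.bernoulli (m+1)))
      (aeval (y - c) (Polynomial.derivative (Polynomial.bernoulli (m+1)))) (y - c) := by
    have := Polynomial.hasDerivAt ((Polynomial.bernoulli (m+1)).map (algebraMap ℚ ℝ)) (y - c)
    simp only [← eval_map_algebraMap, derivative_map] at this ⊢
    exact this
  have h1 : HasDerivAt (fun y : ℝ => y - c) 1 y := (hasDerivAt_id y).sub_const c
  have h2 := (hp.comp y h1).div_const ((m+1).factorial : ℝ)
  simp only [mul_one, Function.comp_def] at h2
  refine h2.congr_deriv ?_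
  symm
  rw [Polynomial.derivative_bernoulli_add_one]
  have h3 : (aeval (y - c) ((((m:ℕ)+1 : ℕ) : ℚ[X]) * Polynomial.bernoulli m) : ℝ)
      = ((m:ℝ)+1) * Bp m (y - c) := by
    rw [map_mul, Bp]; push_cast; simp
  push_cast at h3
  rw [h3, Nat.factorial_succ]
  have hm : ((m:ℝ)+1) ≠ 0 := by positivity
  field_simp
  push_cast
  ring

lemma em_parts (f : ℝ → ℝ) (n : ℕ) (hf : ContDiff ℝ (n : ℕ) f) (m : ℕ) (hmn : m < n) (c : ℝ) :
    ∫ y in c..c+1, Bp m (y - c) / m.factorial * iteratedDeriv m f y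
      = ((bernoulli' (m+1) : ℚ) : ℝ) / (m+1).factorial * iteratedDeriv m f (c+1)
        - ((bernoulli (m+1) : ℚ) : ℝ) / (m+1).factorial * iteratedDeriv m f c
        - ∫ y in c..c+1, Bp (m+1) (y - c) / (m+1).factorial * iteratedDeriv (m+1) f y := by
  have hv : ∀ x ∈ Set.uIcc c (c+1), HasDerivAt (iteratedDeriv m f) (iteratedDeriv (m+1) f x) x := by
    intro x _
    have hd : DifferentiableAt ℝ (iteratedDeriv m f) x :=
      (hf.differentiable_iteratedDeriv m (by exact_mod_cast hmn)).differentiableAt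
    simpa [iteratedDeriv_succ] using hd.hasDerivAt
  have hu : ∀ x ∈ Set.uIcc c (c+1),
      HasDerivAt (fun y => Bp (m+1) (y - c) / (m+1).factorial) (Bp m (x - c) / m.factorial) x :=
    fun x _ => Bp_hasDeriv m c x
  have hcont : ∀ k : ℕ, k ≤ n → Continuous (iteratedDeriv k f) := fun k hk =>
    hf.continuous_iteratedDeriv k (by exact_mod_cast hk)
  have hiu : IntervalIntegrable (fun y => Bp m (y - c) / m.factorial) MeasureTheory.volume c (c+1) :=
    (((Bp_cont m).comp (continuous_id.sub continuous_const)).div_const _).intervalIntegrable _ _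
  have hiv : IntervalIntegrable (iteratedDeriv (m+1) f) MeasureTheory.volume c (c+1) :=
    (hcont (m+1) hmn).intervalIntegrable _ _
  have := integral_mul_deriv_eq_deriv_mul hu hv hiu hiv
  have heq : ∀ y:ℝ, Bp m (y - c) / m.factorial * iteratedDeriv m f y
      = Bp m (y - c) / m.factorial * iteratedDeriv m f y := fun _ => rfl
  rw [eq_sub_iff_add_eq, eq_sub_iff_add_eq]
  rw [eq_sub_iff_add_eq] at this
  have h1 : Bp (m+1) (c + 1 - c) = ((bernoulli' (m+1) : ℚ) : ℝ) := by
    rw [show c + 1 - c = 1 by ring, Bp_one]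
  have h0 : Bp (m+1) (c - c) = ((bernoulli (m+1) : ℚ) : ℝ) := by
    rw [sub_self, Bp_zero]
  rw [h1, h0] at this
  linarith [this]

lemma em_core (f : ℝ → ℝ) (n : ℕ) (hf : ContDiff ℝ (n : ℕ) f) :
    ∀ m : ℕ, 1 ≤ m → m ≤ n → ∀ c : ℝ,
    (∫ y in c..c+1, f y) - (f c + f (c+1)) / 2
      = (-1 : ℝ)^m * (∫ y in c..c+1, Bp m (y - c) / m.factorial * iteratedDeriv m f y)
        - ∑ j ∈ Icc 2 m, (-1 : ℝ)^j * ((_root_.bernoulli j : ℚ) : ℝ) / j.factorial *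
            (iteratedDeriv (j-1) f (c+1) - iteratedDeriv (j-1) f c) := by
  intro m
  induction m with
  | zero => omega
  | succ m ih =>
    intro _ hmn c
    rcases Nat.eq_zero_or_pos m with hm0 | hm1
    · subst hm0
      have hB0 : ∀ y : ℝ, Bp 0 (y - c) = 1 := by
        intro y; simp [Bp, Polynomial.bernoulli_zero]
      have h := em_parts f n hf 0 (by omega) c
      simp only [iteratedDeriv_zero, zero_add, Nat.factorial_zero, Nat.factorial_one,
        Nat.cast_one, bernoulli'_one, _root_.bernoulli_one, div_one, hB0, one_mul] at h
      simp only [show Finset.Icc 2 1 = (∅ : Finset ℕ) from rfl, Finset.sum_empty, zero_add,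
        pow_one, Nat.factorial_one, Nat.cast_one, div_one]
      rw [h]
      push_cast
      ring
    · have hb : bernoulli' (m+1) = _root_.bernoulli (m+1) :=
        (bernoulli_eq_bernoulli'_of_ne_one (by omega)).symm
      have hstep := em_parts f n hf m (by omega) c
      rw [hb] at hstep
      rw [ih hm1 (by omega) c, hstep, Finset.sum_Icc_succ_top (by omega : 2 ≤ m + 1)]
      simp only [Nat.add_sub_cancel]
      push_cast
      ring

lemma em_unit (f : ℝ → ℝ) (N : ℕ) (hN : 0 < N) (hf : ContDiff ℝ ((2*N : ℕ) : ℕ)  f) (c : ℝ) :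
    (∫ y in c..c+1, f y) - (f c + f (c+1)) / 2
      = (∫ y in c..c+1, Bp (2*N) (y - c) / (2*N).factorial * iteratedDeriv (2*N) f y)
        - ∑ j ∈ Icc 1 N, ((_root_.bernoulli (2*j) : ℚ) : ℝ) / (2*j).factorial *
            (iteratedDeriv (2*j-1) f (c+1) - iteratedDeriv (2*j-1) f c) := by
  have h := em_core f (2*N) hf (2*N) (by omega) le_rfl c
  rw [(even_two_mul N).neg_one_pow, one_mul] at h
  rw [h]
  congr 1
  have himg : (Finset.Icc 1 N).image (fun i => 2*i) ⊆ Finset.Icc 2 (2*N) := by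
    intro x hx
    simp only [Finset.mem_image, Finset.mem_Icc] at hx ⊢
    omega
  rw [← Finset.sum_subset himg ?_]
  · rw [Finset.sum_image (by intro x _ y _ hxy; simp only at hxy; omega)]
    apply Finset.sum_congr rfl
    intro i _
    rw [(even_two_mul i).neg_one_pow, one_mul]
  · intro x hx hnx
    have hodd : Odd x := by
      rcases Nat.even_or_odd x with he | ho
      · exfalso; apply hnx
        obtain ⟨i, hi⟩ := he
        simp only [Finset.mem_Icc] at hx
        simp only [Finset.mem_image, Finset.mem_Icc]
        exact ⟨i, by omega, by omega⟩
      · exact ho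
    have hx2 : x ≠ 1 := by simp only [Finset.mem_Icc] at hx; omega
    have : _root_.bernoulli x = 0 := by
      rw [bernoulli_eq_bernoulli'_of_ne_one hx2]
      exact bernoulli'_eq_zero_of_odd hodd (by simp only [Finset.mem_Icc] at hx; omega)
    simp [this]

lemma em_sum (f : ℝ → ℝ) (N K : ℕ) (hN : 0 < N) (hK : 0 < K)
    (hf : ContDiff ℝ ((2*N : ℕ) : ℕ) f) :
    (∫ y in (0:ℝ)..(K:ℝ), f y) - (1/2) * ∑ j ∈ range K, (f j + f (j+1))
      = (∫ y in (0:ℝ)..(K:ℝ), Bp (2*N) (Int.fract y) / (2*N).factorial * iteratedDeriv (2*N) f y)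
        - ∑ j ∈ Icc 1 N, ((_root_.bernoulli (2*j) : ℚ) : ℝ) / (2*j).factorial *
            (iteratedDeriv (2*j-1) f K - iteratedDeriv (2*j-1) f 0) := by
  have hFc : Continuous (iteratedDeriv (2*N) f) := hf.continuous_iteratedDeriv _ le_rfl
  set G : ℝ → ℝ := fun y => Bp (2*N) (Int.fract y) / (2*N).factorial * iteratedDeriv (2*N) f y
    with hG
  have hGk_cont : ∀ c : ℝ, Continuous (fun y => Bp (2*N) (y - c) / (2*N).factorial
      * iteratedDeriv (2*N) f y) :=
    fun c => (((Bp_cont _).comp (continuous_id.sub continuous_const)).div_const _).mul hFc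
  -- a.e. equality on each unit interval [k, k+1]
  have hae : ∀ k : ℕ, ∀ᵐ x : ℝ, x ∈ Set.uIoc (k:ℝ) ((k:ℝ)+1) →
      G x = Bp (2*N) (x - k) / (2*N).factorial * iteratedDeriv (2*N) f x := by
    intro k
    have hne : ∀ᵐ x : ℝ, x ≠ (k:ℝ)+1 := by
      refine (MeasureTheory.ae_iff).mpr ?_
      have hset : {x : ℝ | ¬ x ≠ (k:ℝ)+1} = {(k:ℝ)+1} := by ext x; simp
      rw [hset]
      exact measure_singleton _
    filter_upwards [hne] with x hx hmem
    rw [Set.uIoc_of_le (by linarith : (k:ℝ) ≤ (k:ℝ)+1)] at hmem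
    have hfl : ⌊x⌋ = (k : ℤ) := by
      rw [Int.floor_eq_iff]
      constructor
      · push_cast; exact le_of_lt hmem.1
      · push_cast
        rcases lt_or_eq_of_le hmem.2 with h' | h'
        · exact h'
        · exact absurd h' hx
    have : Int.fract x = x - k := by rw [Int.fract, hfl]; push_cast; ring
    rw [hG]
    simp only [this]
  have hGint : ∀ k : ℕ, IntervalIntegrable G volume (k:ℝ) ((k:ℝ)+1) := by
    intro k
    refine ((hGk_cont (k:ℝ)).intervalIntegrable _ _).congr_ae ?_
    refine (MeasureTheory.ae_restrict_iff' (measurableSet_uIoc (α := ℝ))).mpr ?_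
    filter_upwards [hae k] with x hx hmem
    exact (hx hmem).symm
  -- integral of G over [k,k+1] equals continuous version
  have hGeq : ∀ k : ℕ, (∫ y in (k:ℝ)..((k:ℝ)+1), G y)
      = ∫ y in (k:ℝ)..((k:ℝ)+1), Bp (2*N) (y - k) / (2*N).factorial * iteratedDeriv (2*N) f y := by
    intro k
    exact intervalIntegral.integral_congr_ae (hae k)
  -- split integrals into sums over unit intervals
  have hsplit : ∀ (F : ℝ → ℝ), (∀ k : ℕ, k < K → IntervalIntegrable F volume (k:ℝ) ((k:ℝ)+1)) →
      (∫ y in (0:ℝ)..(K:ℝ), F y) = ∑ k ∈ range K, ∫ y in (k:ℝ)..((k:ℝ)+1), F y := by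
    intro F hFint
    have := intervalIntegral.sum_integral_adjacent_intervals (a := fun i : ℕ => (i:ℝ)) (n := K)
      (fun k hk => by push_cast; exact hFint k hk)
    push_cast at this
    exact this.symm
  have hsf := hsplit f (fun k _ => (hf.continuous).intervalIntegrable _ _)
  have hsG := hsplit G (fun k _ => hGint k)
  rw [hsf, hsG]
  -- apply em_unit on each interval, sum up
  have hunit : ∀ k : ℕ, (∫ y in (k:ℝ)..((k:ℝ)+1), f y)
      = (f k + f (k+1)) / 2
        + ((∫ y in (k:ℝ)..((k:ℝ)+1), G y)
        - ∑ j ∈ Icc 1 N, ((_root_.bernoulli (2*j) : ℚ) : ℝ) / (2*j).factorial *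
            (iteratedDeriv (2*j-1) f ((k:ℝ)+1) - iteratedDeriv (2*j-1) f (k:ℝ))) := by
    intro k
    have := em_unit f N hN hf (k:ℝ)
    rw [hGeq k]
    linarith [this]
  rw [Finset.sum_congr rfl (fun k _ => hunit k)]
  rw [Finset.sum_add_distrib, Finset.sum_sub_distrib]
  have htel : ∀ j : ℕ, ∑ k ∈ range K,
      (iteratedDeriv (2*j-1) f ((k:ℝ)+1) - iteratedDeriv (2*j-1) f (k:ℝ))
      = iteratedDeriv (2*j-1) f (K:ℝ) - iteratedDeriv (2*j-1) f (0:ℝ) := by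
    intro j
    have h := Finset.sum_range_sub (f := fun k : ℕ => iteratedDeriv (2*j-1) f (k:ℝ)) K
    simp only [Nat.cast_zero] at h
    rw [← h]
    apply Finset.sum_congr rfl
    intro k _
    push_cast
    ring_nf
  have hswap : ∑ k ∈ range K, ∑ j ∈ Icc 1 N,
      ((_root_.bernoulli (2*j) : ℚ) : ℝ) / (2*j).factorial *
        (iteratedDeriv (2*j-1) f ((k:ℝ)+1) - iteratedDeriv (2*j-1) f (k:ℝ))
      = ∑ j ∈ Icc 1 N, ((_root_.bernoulli (2*j) : ℚ) : ℝ) / (2*j).factorial *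
          (iteratedDeriv (2*j-1) f (K:ℝ) - iteratedDeriv (2*j-1) f (0:ℝ)) := by
    rw [Finset.sum_comm]
    apply Finset.sum_congr rfl
    intro j _
    rw [← Finset.mul_sum, htel j]
  rw [hswap]
  have hA : ∑ k ∈ range K, (f (k:ℝ) + f ((k:ℝ)+1)) / 2
      = (∑ k ∈ range K, (f (k:ℝ) + f ((k:ℝ)+1))) / 2 := (Finset.sum_div _ _ _).symm
  rw [hA]
  ring

end EulerMaclaurinAux

open Finset intervalIntegral in
/-- The Euler–Maclaurin formula of order `N` for the error of the trapezoidal rule. -/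
theorem euler_maclaurin (g : ℝ → ℝ) (N : ℕ) (hN : 0 < N)
    (hg : ContDiff ℝ (2 * N : ℕ) g) (a b h : ℝ) (hab : a < b) (hh : 0 < h)
    (K : ℕ) (hK : 0 < K) (hKh : (b - a) / h = K) :
    (∫ y in a..b, g y) -
        (h / 2) * ∑ j ∈ range K, (g (a + j * h) + g (a + (j + 1) * h)) =
      h ^ (2 * N + 1) *
          (∫ y in (0 : ℝ)..(K : ℝ),
            (Polynomial.aeval (Int.fract y) (Polynomial.bernoulli (2 * N)) : ℝ) /
                (Nat.factorial (2 * N)) * iteratedDeriv (2 * N) g (a + y * h)) -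
        ∑ j ∈ Finset.Icc 1 N,
          ((bernoulli (2 * j) : ℚ) : ℝ) / (Nat.factorial (2 * j)) * h ^ (2 * j) *
            (iteratedDeriv (2 * j - 1) g b - iteratedDeriv (2 * j - 1) g a) := by
  have hne : h ≠ 0 := hh.ne'
  have hba : b = a + K * h := by
    have := (div_eq_iff hne).mp hKh
    linarith
  set f : ℝ → ℝ := fun y => g (a + y * h) with hfdef
  have hcomp : ∀ m : ℕ, m ≤ 2*N →
      iteratedDeriv m f = fun y => h^m * iteratedDeriv m g (a + y*h) := by
    intro m hm
    have hGm : ContDiff ℝ (m : ℕ) (fun u : ℝ => g (a + u)) :=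
      (hg.of_le (by exact_mod_cast hm)).comp (contDiff_const.add contDiff_id)
    have h1 : f = fun y => (fun u : ℝ => g (a + u)) (h * y) := by
      funext y; simp [hfdef, mul_comm]
    rw [h1, iteratedDeriv_comp_const_mul hGm h, iteratedDeriv_comp_const_add]
    funext y
    rw [mul_comm h y]
  have hf : ContDiff ℝ ((2*N : ℕ) : ℕ) f :=
    hg.comp (contDiff_const.add (contDiff_id.mul contDiff_const))
  have hem := em_sum f N K hN hK hf
  -- change of variables for the main integral
  have h1 : (∫ y in a..b, g y) = h * ∫ y in (0:ℝ)..(K:ℝ), f y := by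
    have hcv := intervalIntegral.integral_comp_add_mul g hne a (a := (0:ℝ)) (b := (K:ℝ))
    have heq : (∫ y in (0:ℝ)..(K:ℝ), f y) = ∫ y in (0:ℝ)..(K:ℝ), g (a + h * y) := by
      apply intervalIntegral.integral_congr
      intro y _
      simp [hfdef, mul_comm]
    rw [heq, hcv]
    rw [show a + h * 0 = a by ring, show a + h * (K:ℝ) = b by rw [hba]; ring]
    simp [smul_eq_mul]
    field_simp
  -- the Bernoulli-weighted integral
  have h2 : (∫ y in (0:ℝ)..(K:ℝ), Bp (2*N) (Int.fract y) / (2*N).factorial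
        * iteratedDeriv (2*N) f y)
      = h^(2*N) * ∫ y in (0:ℝ)..(K:ℝ), Bp (2*N) (Int.fract y) / (2*N).factorial
        * iteratedDeriv (2*N) g (a + y*h) := by
    rw [hcomp (2*N) le_rfl]
    rw [← intervalIntegral.integral_const_mul]
    apply intervalIntegral.integral_congr
    intro y _
    ring
  -- endpoint terms
  have h3 : ∀ j : ℕ, j ∈ Finset.Icc 1 N →
      iteratedDeriv (2*j-1) f (K:ℝ) - iteratedDeriv (2*j-1) f 0
        = h^(2*j-1) * (iteratedDeriv (2*j-1) g b - iteratedDeriv (2*j-1) g a) := by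
    intro j hj
    rw [hcomp (2*j-1) (by simp only [Finset.mem_Icc] at hj; omega)]
    simp only
    rw [show a + (K:ℝ)*h = b by rw [hba], show a + (0:ℝ)*h = a by ring]
    ring
  have h3' : ∀ j ∈ Finset.Icc 1 N,
      ((_root_.bernoulli (2*j) : ℚ) : ℝ) / (2*j).factorial *
        (iteratedDeriv (2*j-1) f (K:ℝ) - iteratedDeriv (2*j-1) f 0)
      = ((_root_.bernoulli (2*j) : ℚ) : ℝ) / (2*j).factorial *
        (h^(2*j-1) * (iteratedDeriv (2*j-1) g b - iteratedDeriv (2*j-1) g a)) := by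
    intro j hj
    rw [h3 j hj]
  rw [h2, show (∑ j ∈ Finset.Icc 1 N, ((_root_.bernoulli (2*j) : ℚ) : ℝ) / (2*j).factorial *
        (iteratedDeriv (2*j-1) f (K:ℝ) - iteratedDeriv (2*j-1) f 0))
      = ∑ j ∈ Finset.Icc 1 N, ((_root_.bernoulli (2*j) : ℚ) : ℝ) / (2*j).factorial *
        (h^(2*j-1) * (iteratedDeriv (2*j-1) g b - iteratedDeriv (2*j-1) g a))
      from Finset.sum_congr rfl h3'] at hem
  -- assemble
  have hS : ∑ j ∈ range K, (g (a + j*h) + g (a + (j+1)*h))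
      = ∑ j ∈ range K, (f j + f (j+1)) := rfl
  have key : (∫ y in a..b, g y) - (h/2) * ∑ j ∈ range K, (g (a + j*h) + g (a + (j+1)*h))
      = h * ((∫ y in (0:ℝ)..(K:ℝ), f y) - (1/2) * ∑ j ∈ range K, (f j + f (j+1))) := by
    rw [h1, hS]
    ring
  rw [key, hem, mul_sub, Finset.mul_sum]
  congr 1
  · rw [← mul_assoc, ← pow_succ']
    rfl
  · apply Finset.sum_congr rfl
    intro j hj
    simp only [Finset.mem_Icc] at hj
    rw [show h^(2*j) = h * h^(2*j-1) by rw [← pow_succ']; congr 1; omega]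
    ring
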